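/- Let x_k ∈ ℝⁿ, let H be any symmetric positive semidefinite matrix, and for y ∈ ℝⁿ define r(y) = y − prox_g(y − (∇f(x_k) + H(y − x_k))). Then for every y ∈ ℝⁿ, ‖G(x_k) − r(y)‖ ≤ ‖(I + H)(x_k − y)‖. -/

import Mathlib

open scoped RealInnerProductSpace

section Aux

variable {E : Type*} [NormedAddCommGroup E] [InnerProductSpace ℝ E]

lemma prox_var_ineq (g : E → ℝ) (hg : ConvexOn ℝ Set.univ g) (x u : E)
    (hu : IsMinOn (fun u => g u + (1 / 2) * ‖u - x‖ ^ 2) Set.univ u) :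
    ∀ v : E, ⟪x - u, v - u⟫ ≤ g v - g u := by
  intro v
  have key : ∀ t : ℝ, 0 < t → t ≤ 1 →
      ⟪x - u, v - u⟫ - (g v - g u) ≤ t * (‖v - u‖ ^ 2 / 2) := by
    intro t ht ht1
    have hmin := hu (Set.mem_univ (u + t • (v - u)))
    simp only [Set.mem_univ, Set.mem_setOf_eq] at hmin
    have hconv : g (u + t • (v - u)) ≤ (1 - t) * g u + t * g v := by
      have := hg.2 (Set.mem_univ u) (Set.mem_univ v) (by linarith : (0:ℝ) ≤ 1 - t)
        (le_of_lt ht) (by ring)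
      have heq : (1 - t) • u + t • v = u + t • (v - u) := by
        simp [smul_sub, sub_smul]; abel
      rw [heq] at this
      simpa using this
    have hnorm : ‖u + t • (v - u) - x‖ ^ 2
        = ‖u - x‖ ^ 2 + 2 * (t * ⟪u - x, v - u⟫) + t ^ 2 * ‖v - u‖ ^ 2 := by
      have : u + t • (v - u) - x = (u - x) + t • (v - u) := by abel
      rw [this, norm_add_sq_real, real_inner_smul_right, norm_smul]
      simp only [Real.norm_eq_abs, abs_of_pos ht, mul_pow]
      try ring
    have h1 : g u + (1/2) * ‖u - x‖ ^ 2 ≤ g (u + t • (v - u)) + (1/2) * ‖u + t • (v - u) - x‖ ^ 2 := hmin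
    rw [hnorm] at h1
    have h2 : 0 ≤ t * (g v - g u) + t * ⟪u - x, v - u⟫ + t ^ 2 / 2 * ‖v - u‖ ^ 2 := by
      nlinarith [hconv]
    have h3 : t * (⟪x - u, v - u⟫ - (g v - g u)) ≤ t * (t * (‖v - u‖ ^ 2 / 2)) := by
      have : ⟪x - u, v - u⟫ = - ⟪u - x, v - u⟫ := by
        rw [← inner_neg_left]; congr 1; abel
      rw [this]; nlinarith [h2]
    have := (mul_le_mul_iff_right₀ ht).mp h3
    calc ⟪x - u, v - u⟫ - (g v - g u) ≤ t * (‖v - u‖ ^ 2 / 2) := this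
      _ ≤ t * (‖v - u‖ ^ 2 / 2) := le_refl _
  -- conclude via ε-argument
  have hK : (0:ℝ) ≤ ‖v - u‖ ^ 2 / 2 := by positivity
  by_contra hcon
  push_neg at hcon
  set c := ⟪x - u, v - u⟫ - (g v - g u) with hc
  have hcpos : 0 < c := by simp [hc]; linarith
  rcases eq_or_lt_of_le hK with h0 | h0
  · have := key 1 one_pos le_rfl
    rw [← h0] at this; linarith
  · set t := min 1 (c / (2 * (‖v - u‖ ^ 2 / 2))) with htdef
    have htpos : 0 < t := lt_min one_pos (by positivity)
    have ht1 : t ≤ 1 := min_le_left _ _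
    have := key t htpos ht1
    have ht2 : t * (‖v - u‖ ^ 2 / 2) ≤ c / 2 := by
      have : t ≤ c / (2 * (‖v - u‖ ^ 2 / 2)) := min_le_right _ _
      calc t * (‖v - u‖ ^ 2 / 2) ≤ (c / (2 * (‖v - u‖ ^ 2 / 2))) * (‖v - u‖ ^ 2 / 2) := by
            apply mul_le_mul_of_nonneg_right this (le_of_lt h0)
        _ = c / 2 := by
            have hK2 : (‖v - u‖ ^ 2 * 2 : ℝ) ≠ 0 := ne_of_gt (by linarith)
            have hne : ‖v - u‖ ≠ 0 := fun h => by rw [h] at h0; norm_num at h0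
            field_simp
    linarith

end Aux

set_option maxHeartbeats 800000 in
/-- For any symmetric positive semidefinite `H` and
`r(y) = y − prox_g(y − (∇f(x_k) + H(y − x_k)))`, one has
`‖G(x_k) − r(y)‖ ≤ ‖(I + H)(x_k − y)‖` for all `y`. -/
theorem stmt3 {n : ℕ}
    (f g : EuclideanSpace ℝ (Fin n) → ℝ)
    (hf : ContDiff ℝ 1 f)
    (hg : ConvexOn ℝ Set.univ g) (hgc : Continuous g)
    (proxg : EuclideanSpace ℝ (Fin n) → EuclideanSpace ℝ (Fin n))
    (hprox : ∀ x, IsMinOn (fun u => g u + (1 / 2) * ‖u - x‖ ^ 2) Set.univ (proxg x))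
    (hproxU : ∀ x u, IsMinOn (fun u => g u + (1 / 2) * ‖u - x‖ ^ 2) Set.univ u → u = proxg x)
    (G : EuclideanSpace ℝ (Fin n) → EuclideanSpace ℝ (Fin n))
    (hG : ∀ x, G x = x - proxg (x - gradient f x))
    (xk : EuclideanSpace ℝ (Fin n)) (H : EuclideanSpace ℝ (Fin n) →L[ℝ] EuclideanSpace ℝ (Fin n))
    (hHsym : ∀ u v, ⟪H u, v⟫ = ⟪u, H v⟫)
    (hHpsd : ∀ v, 0 ≤ ⟪v, H v⟫)
    (r : EuclideanSpace ℝ (Fin n) → EuclideanSpace ℝ (Fin n))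
    (hr : ∀ y, r y = y - proxg (y - (gradient f xk + H (y - xk)))) :
    ∀ y, ‖G xk - r y‖ ≤ ‖(ContinuousLinearMap.id ℝ (EuclideanSpace ℝ (Fin n)) + H) (xk - y)‖ := by
  intro y
  set a := xk - gradient f xk with ha
  set b := y - (gradient f xk + H (y - xk)) with hb
  set pa := proxg a with hpa
  set pb := proxg b with hpb
  set d := xk - y with hd
  set p := pa - pb with hp
  -- a - b = d - H d
  have hab : a - b = d - H d := by
    rw [ha, hb, hd]
    have : H (y - xk) = - H (xk - y) := by rw [← map_neg]; congr 1; abel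
    rw [this]
    abel
  -- firm nonexpansiveness
  have h1 := prox_var_ineq g hg a pa (hprox a) pb
  have h2 := prox_var_ineq g hg b pb (hprox b) pa
  have hfirm : ‖p‖ ^ 2 ≤ ⟪p, d - H d⟫ := by
    have hsum : ⟪a - pa, pb - pa⟫ + ⟪b - pb, pa - pb⟫ ≤ 0 := by linarith
    have e1 : ⟪a - pa, pb - pa⟫ = - ⟪a - pa, p⟫ := by
      rw [← inner_neg_right]; congr 1; rw [hp]; abel
    have e2 : ⟪b - pb, pa - pb⟫ = ⟪b - pb, p⟫ := by rw [hp]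
    rw [e1, e2] at hsum
    have e3 : (⟪a - pa, p⟫ - ⟪b - pb, p⟫ : ℝ) = ⟪a - b - p, p⟫ := by
      rw [← inner_sub_left]; congr 1; rw [hp]; abel
    have e4 : (⟪a - b - p, p⟫ : ℝ) = ⟪a - b, p⟫ - ⟪p, p⟫ := inner_sub_left _ _ _
    have e5 : (⟪a - b, p⟫ : ℝ) = ⟪p, d - H d⟫ := by rw [hab, real_inner_comm]
    have e6 : (⟪p, p⟫ : ℝ) = ‖p‖ ^ 2 := real_inner_self_eq_norm_sq p
    linarith
  -- norm identities
  have hGr : G xk - r y = d - p := by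
    rw [hG, hr, ← ha, ← hb, ← hpa, ← hpb, hp, hd]; abel
  have hIH : (ContinuousLinearMap.id ℝ (EuclideanSpace ℝ (Fin n)) + H) (xk - y) = d + H d := by
    simp [hd]
  rw [hGr, hIH]
  -- key norm comparisons
  have hcle : ‖d - H d‖ ≤ ‖d + H d‖ := by
    have hsq : ‖d - H d‖ ^ 2 + 4 * ⟪d, H d⟫ = ‖d + H d‖ ^ 2 := by
      rw [norm_add_sq_real, norm_sub_sq_real]; ring
    nlinarith [hHpsd d, norm_nonneg (d - H d), norm_nonneg (d + H d)]
  have hball : ‖(1/2 : ℝ) • (d - H d) - p‖ ≤ ‖d - H d‖ / 2 := by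
    have hsq : ‖(1/2 : ℝ) • (d - H d) - p‖ ^ 2
        = (1/4) * ‖d - H d‖ ^ 2 - ⟪p, d - H d⟫ + ‖p‖ ^ 2 := by
      rw [norm_sub_sq_real, norm_smul, real_inner_smul_left, real_inner_comm]
      simp
      ring
    nlinarith [hfirm, norm_nonneg ((1/2 : ℝ) • (d - H d) - p), norm_nonneg (d - H d)]
  have hdecomp : d - p = (1/2 : ℝ) • (d + H d) + ((1/2 : ℝ) • (d - H d) - p) := by
    rw [smul_sub, smul_add]
    module
  calc ‖d - p‖ ≤ ‖(1/2 : ℝ) • (d + H d)‖ + ‖(1/2 : ℝ) • (d - H d) - p‖ := by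
        rw [hdecomp]; exact norm_add_le _ _
    _ ≤ ‖d + H d‖ / 2 + ‖d - H d‖ / 2 := by
        rw [norm_smul]; simp; linarith [hball]
    _ ≤ ‖d + H d‖ := by linarith [hcle]
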